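/- A nonempty word u is primitive if and only if u is not a factor (contiguous substring) of u_F u_L, where u_F is u with its first letter removed and u_L is u with its last letter removed. -/

import Mathlib

/-- k-fold concatenation (power) of a word. -/
def wpow {σ : Type*} (z : List σ) (k : ℕ) : List σ := (List.replicate k z).flatten

/-- A nonempty word is primitive if it is not a proper power. -/
def WPrimitive {σ : Type*} (w : List σ) : Prop :=
  w ≠ [] ∧ ∀ (v : List σ) (e : ℕ), 2 ≤ e → w ≠ wpow v e

theorem fin_pos_of_mul {p m : ℕ} (i : Fin (p * m)) : 0 < m :=
  Nat.pos_of_ne_zero fun h => absurd i.isLt (by simp [h])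

/-- `arrRep A p q` is `A^{p×q}`: the array `A` repeated in `p` rows and `q` columns. -/
def arrRep {σ : Type*} {m n : ℕ} (A : Fin m × Fin n → σ) (p q : ℕ) :
    Fin (p * m) × Fin (q * n) → σ :=
  fun x => A (⟨x.1.val % m, Nat.mod_lt _ (fin_pos_of_mul x.1)⟩,
              ⟨x.2.val % n, Nat.mod_lt _ (fin_pos_of_mul x.2)⟩)

/-- Equality of arrays of possibly (syntactically) different dimensions. -/
def arrEq {σ : Type*} {m n m' n' : ℕ} (A : Fin m × Fin n → σ)
    (B : Fin m' × Fin n' → σ) : Prop :=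
  m = m' ∧ n = n' ∧ ∀ (i j : ℕ) (h1 : i < m) (h2 : j < n) (h1' : i < m') (h2' : j < n'),
    A (⟨i, h1⟩, ⟨j, h2⟩) = B (⟨i, h1'⟩, ⟨j, h2'⟩)

/-- An array is primitive if it is not a nontrivial `p×q` repetition of another array. -/
def ArrPrimitive {σ : Type*} {m n : ℕ} (M : Fin m × Fin n → σ) : Prop :=
  ∀ (m' n' p q : ℕ) (A : Fin m' × Fin n' → σ), 0 < p → 0 < q →
    arrEq M (arrRep A p q) → p = 1 ∧ q = 1

/-- Horizontal concatenation of arrays with equal numbers of rows. -/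
def hcat {σ : Type*} {m1 m2 n1 n2 : ℕ} (h : m1 = m2)
    (A : Fin m1 × Fin n1 → σ) (B : Fin m2 × Fin n2 → σ) :
    Fin m1 × Fin (n1 + n2) → σ :=
  fun x => if hn : x.2.val < n1 then A (x.1, ⟨x.2.val, hn⟩)
           else B (⟨x.1.val, h ▸ x.1.isLt⟩, ⟨x.2.val - n1, by have := x.2.isLt; omega⟩)

/-- Vertical concatenation of arrays with equal numbers of columns. -/
def vcat {σ : Type*} {m1 m2 n1 n2 : ℕ} (h : n1 = n2)
    (A : Fin m1 × Fin n1 → σ) (B : Fin m2 × Fin n2 → σ) :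
    Fin (m1 + m2) × Fin n1 → σ :=
  fun x => if hm : x.1.val < m1 then A (⟨x.1.val, hm⟩, x.2)
           else B (⟨x.1.val - m1, by have := x.1.isLt; omega⟩, ⟨x.2.val, h ▸ x.2.isLt⟩)

/-- The word over the alphabet of columns corresponding to an array. -/
def colWord {σ : Type*} {m n : ℕ} (A : Fin m × Fin n → σ) : List (Fin m → σ) :=
  List.ofFn fun j => fun i => A (i, j)

/-- Row `i` of an array, as a word. -/
def rowWord {σ : Type*} {m n : ℕ} (A : Fin m × Fin n → σ) (i : Fin m) : List σ :=
  List.ofFn fun j => A (i, j)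

/-- Column `j` of an array, as a word. -/
def colAt {σ : Type*} {m n : ℕ} (A : Fin m × Fin n → σ) (j : Fin n) : List σ :=
  List.ofFn fun i => A (i, j)

/-- Row-major reading of an array. -/
def rowMajor {σ : Type*} {m n : ℕ} (A : Fin m × Fin n → σ) : List σ :=
  (List.ofFn fun i => rowWord A i).flatten

/-- `{x,y}*`: words that are concatenations of copies of `x` and `y`. -/
def InStar {σ : Type*} (x y w : List σ) : Prop :=
  ∃ L : List (List σ), (∀ u ∈ L, u = x ∨ u = y) ∧ w = L.flatten


lemma wpow_zero {σ : Type*} (z : List σ) : wpow z 0 = [] := rfl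
lemma wpow_succ {σ : Type*} (z : List σ) (k : ℕ) : wpow z (k+1) = z ++ wpow z k := by
  simp [wpow, List.replicate_succ]
lemma wpow_add {σ : Type*} (z : List σ) (i j : ℕ) : wpow z (i+j) = wpow z i ++ wpow z j := by
  induction i with
  | zero => simp [wpow_zero]
  | succ n ih => rw [Nat.succ_add, wpow_succ, wpow_succ, ih, List.append_assoc]
lemma wpow_length {σ : Type*} (z : List σ) (k : ℕ) : (wpow z k).length = k * z.length := by
  simp [wpow, List.length_flatten, Nat.mul_comm]

lemma comm_words {σ : Type*} : ∀ N (x y : List σ), x.length + y.length ≤ N →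
    x ++ y = y ++ x → ∃ (z : List σ) (i j : ℕ), x = wpow z i ∧ y = wpow z j := by
  intro N
  induction N with
  | zero =>
    intro x y hN _
    have hx : x = [] := by simpa using List.length_eq_zero_iff.mp (by omega)
    have hy : y = [] := by simpa using List.length_eq_zero_iff.mp (by omega)
    exact ⟨[], 0, 0, by simp [hx, wpow_zero], by simp [hy, wpow_zero]⟩
  | succ N ih =>
    intro x y hN hc
    rcases eq_or_ne x [] with hx | hx
    · exact ⟨y, 0, 1, by simp [hx, wpow_zero], by simp [wpow_succ, wpow_zero]⟩
    rcases eq_or_ne y [] with hy | hy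
    · exact ⟨x, 1, 0, by simp [wpow_succ, wpow_zero], by simp [hy, wpow_zero]⟩
    rcases le_total x.length y.length with hle | hle
    · -- x prefix of y
      have hpre : x <+: y := by
        have h1 : x <+: x ++ y := List.prefix_append x y
        have h2 : y <+: x ++ y := hc ▸ List.prefix_append y x
        exact List.prefix_of_prefix_length_le h1 h2 hle
      obtain ⟨b, rfl⟩ := hpre
      have hc' : x ++ b = b ++ x := by
        have h : x ++ (x ++ b) = x ++ (b ++ x) := by rw [hc, List.append_assoc]
        exact List.append_cancel_left h
      have hxl : 0 < x.length := List.length_pos_iff.mpr hx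
      obtain ⟨z, i, j, hxz, hbz⟩ := ih x b (by simp at hN ⊢; omega) hc'
      exact ⟨z, i, i + j, hxz, by rw [wpow_add, hxz, hbz]⟩
    · have hpre : y <+: x := by
        have h1 : y <+: y ++ x := List.prefix_append y x
        have h2 : x <+: y ++ x := hc ▸ List.prefix_append x y
        exact List.prefix_of_prefix_length_le h1 h2 hle
      obtain ⟨b, rfl⟩ := hpre
      have hc' : y ++ b = b ++ y := by
        have h : y ++ (y ++ b) = y ++ (b ++ y) := by rw [← hc, List.append_assoc]
        exact List.append_cancel_left h
      have hyl : 0 < y.length := List.length_pos_iff.mpr hy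
      obtain ⟨z, i, j, hyz, hbz⟩ := ih y b (by simp at hN ⊢; omega) hc'
      exact ⟨z, i + j, i, by rw [wpow_add, hyz, hbz], hyz⟩

lemma wpow_one {σ : Type*} (z : List σ) : wpow z 1 = z := by simp [wpow]

theorem stmt17' {σ : Type*} (u : List σ) (hu : u ≠ []) :
    (u ≠ [] ∧ ∀ (v : List σ) (e : ℕ), 2 ≤ e → u ≠ wpow v e) ↔ ¬ u <:+: (u.tail ++ u.dropLast) := by
  constructor
  · rintro ⟨-, hp⟩ ⟨s, t, h⟩
    have key : u ++ u = (u.head hu :: s) ++ u ++ (t ++ [u.getLast hu]) := by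
      calc u ++ u = (u.head hu :: u.tail) ++ (u.dropLast ++ [u.getLast hu]) := by
            rw [List.cons_head_tail, List.dropLast_append_getLast]
        _ = u.head hu :: ((u.tail ++ u.dropLast) ++ [u.getLast hu]) := by
            simp only [List.cons_append, List.append_assoc]
        _ = u.head hu :: ((s ++ u ++ t) ++ [u.getLast hu]) := by rw [h]
        _ = (u.head hu :: s) ++ u ++ (t ++ [u.getLast hu]) := by
            simp only [List.cons_append, List.append_assoc]
    generalize hxd : u.head hu :: s = x at key
    generalize hyd : t ++ [u.getLast hu] = y at key
    have hxne : x ≠ [] := by rw [← hxd]; simp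
    have hyne : y ≠ [] := by rw [← hyd]; simp
    have hlen : x.length + y.length = u.length := by
      have := congrArg List.length key
      simp only [List.length_append] at this
      omega
    have hy1 : 1 ≤ y.length := List.length_pos_iff.mpr hyne
    have hpre : x <+: u := by
      refine List.prefix_of_prefix_length_le ⟨u ++ y, by rw [key]; simp⟩
        (List.prefix_append u u) (by omega)
    obtain ⟨a, hxa⟩ := hpre
    have hcancel : (a ++ x) ++ a = (x ++ a) ++ y := by
      have h2 : x ++ ((a ++ x) ++ a) = x ++ ((x ++ a) ++ y) := by
        calc x ++ ((a ++ x) ++ a) = (x ++ a) ++ (x ++ a) := by simp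
          _ = u ++ u := by rw [hxa]
          _ = x ++ u ++ y := key
          _ = x ++ ((x ++ a) ++ y) := by rw [← hxa]; simp
      exact List.append_cancel_left h2
    have halen : a.length = y.length := by
      have := congrArg List.length hxa
      simp only [List.length_append] at this
      omega
    obtain ⟨hcomm, -⟩ := List.append_inj hcancel (by simp; omega)
    obtain ⟨z, i, j, haz, hxz⟩ := comm_words (a.length + x.length) a x le_rfl hcomm
    have hi : 1 ≤ j := by
      rcases Nat.eq_zero_or_pos j with h0 | h0
      · exact absurd (by rw [hxz, h0, wpow_zero]) hxne
      · exact h0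
    have hj : 1 ≤ i := by
      rcases Nat.eq_zero_or_pos i with h0 | h0
      · have h1 : a.length = 0 := by rw [haz, h0, wpow_zero]; rfl
        omega
      · exact h0
    exact hp z (j + i) (by omega) (by rw [← hxa, hxz, haz, wpow_add])
  · intro hni
    refine ⟨hu, fun v e he huv => hni ?_⟩
    have hv : v ≠ [] := by
      rintro rfl
      exact hu (by rw [huv]; simp [wpow])
    obtain ⟨k, rfl⟩ : ∃ k, e = k + 2 := ⟨e - 2, by omega⟩
    set w := wpow v (k+1) with hwdef
    have hw : w ≠ [] := by
      have h1 : w.length = (k+1) * v.length := wpow_length v (k+1)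
      have hvl : 0 < v.length := List.length_pos_iff.mpr hv
      intro h0
      have h2 : (k+1) * v.length = 0 := by rw [← h1, h0]; rfl
      rcases Nat.mul_eq_zero.mp h2 with h3 | h3
      · omega
      · exact hv (List.length_eq_zero_iff.mp h3)
    have hu1 : u = v ++ w := by rw [huv, hwdef, wpow_succ]
    have hu2 : u = w ++ v := by
      rw [huv, hwdef, show k + 2 = (k+1) + 1 by omega, wpow_add, wpow_one]
    refine ⟨v.tail, w.dropLast, ?_⟩
    calc v.tail ++ u ++ w.dropLast = v.tail ++ (w ++ v) ++ w.dropLast := by rw [← hu2]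
      _ = (v.tail ++ w) ++ (v ++ w.dropLast) := by simp
      _ = u.tail ++ u.dropLast := by
          rw [hu1, List.tail_append_of_ne_nil hv, List.dropLast_append_of_ne_nil hw]

theorem stmt17 {σ : Type*} (u : List σ) (hu : u ≠ []) :
    WPrimitive u ↔ ¬ u <:+: (u.tail ++ u.dropLast) := by
  exact stmt17' u hu
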